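/- Let Φ be an N×N complex matrix that factors as Φ = -M∘M† for some linear operator M from a Hilbert space H to ℂ^N (with M† its adjoint). Then Φ is Hermitian and negative semi-definite, and det(I + Φ·Φ̄) ≥ 1 > 0, where Φ̄ denotes entrywise complex conjugation. -/

import Mathlib

open ContinuousLinearMap Matrix
open scoped ComplexOrder

lemma det_one_add_psd {n : ℕ} {P : Matrix (Fin n) (Fin n) ℂ} (hP : P.PosSemidef) :
    ∃ r : ℝ, 1 ≤ r ∧ (1 + P).det = (r : ℂ) := by
  refine ⟨∏ i, (1 + hP.1.eigenvalues i), ?_, ?_⟩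
  · calc (1:ℝ) = ∏ _i : Fin n, 1 := by simp
      _ ≤ ∏ i, (1 + hP.1.eigenvalues i) :=
        Finset.prod_le_prod (fun i _ => by norm_num)
          (fun i _ => by linarith [hP.eigenvalues_nonneg i])
  · set U : Matrix (Fin n) (Fin n) ℂ := (hP.1.eigenvectorUnitary : Matrix (Fin n) (Fin n) ℂ) with hUdef
    have hU : U * star U = 1 := (Matrix.mem_unitaryGroup_iff).mp hP.1.eigenvectorUnitary.2
    have h1 : (1 : Matrix (Fin n) (Fin n) ℂ) + P
        = U * (1 + diagonal (RCLike.ofReal ∘ hP.1.eigenvalues)) * star U := by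
      rw [Matrix.mul_add, Matrix.add_mul, Matrix.mul_one, hU]
      conv_lhs => rw [hP.1.spectral_theorem]
      rfl
    have hU' : star U * U = 1 := (Matrix.mem_unitaryGroup_iff').mp hP.1.eigenvectorUnitary.2
    rw [h1, Matrix.det_mul, Matrix.det_mul, mul_comm, ← mul_assoc, ← Matrix.det_mul, hU']
    simp only [Matrix.det_one, one_mul]
    rw [← Matrix.diagonal_one, Matrix.diagonal_add, Matrix.det_diagonal]
    push_cast
    simp [Function.comp]

/-- Let `Φ` be an `N×N` complex matrix that factors as `Φ = -M∘M†` for a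
bounded linear operator `M : H → ℂ^N` on a complex Hilbert space `H` (with `M†` its adjoint).
Then `Φ` is Hermitian and negative semi-definite, and `det(I + Φ·Φ̄) ≥ 1 > 0`, where `Φ̄` is the
entrywise complex conjugate of `Φ`. -/
theorem stmt0 {H : Type*} [NormedAddCommGroup H] [InnerProductSpace ℂ H] [CompleteSpace H]
    {N : ℕ} (M : H →L[ℂ] EuclideanSpace ℂ (Fin N))
    (Φ : Matrix (Fin N) (Fin N) ℂ)
    (hΦ : ∀ j k, Φ j k =
      -(M ((ContinuousLinearMap.adjoint M) (EuclideanSpace.single k (1 : ℂ)))) j) :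
    Φ.IsHermitian ∧ (-Φ).PosSemidef ∧
      ∃ r : ℝ, 1 ≤ r ∧ (1 + Φ * Φ.map (starRingEnd ℂ)).det = (r : ℂ) := by
  set f : Fin N → H := fun j => ContinuousLinearMap.adjoint M (EuclideanSpace.single j (1 : ℂ))
    with hf
  have key : ∀ j k, Φ j k = -(inner ℂ (f j) (f k) : ℂ) := by
    intro j k
    rw [hΦ j k]
    congr 1
    calc (M (f k)) j = inner ℂ (EuclideanSpace.single j (1:ℂ)) (M (f k)) := by
          rw [EuclideanSpace.inner_single_left]; simp
      _ = (inner ℂ (f j) (f k) : ℂ) := by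
          rw [hf, ContinuousLinearMap.adjoint_inner_left]
  have hHerm : Φ.IsHermitian := by
    ext i j
    rw [Matrix.conjTranspose_apply, key i j, key j i]
    rw [star_neg, ← starRingEnd_apply, inner_conj_symm]
  have hPSD : (-Φ).PosSemidef := by
    refine Matrix.PosSemidef.of_dotProduct_mulVec_nonneg hHerm.neg fun x => ?_
    have hcalc : star x ⬝ᵥ ((-Φ) *ᵥ x) = (inner ℂ (∑ j, x j • f j) (∑ k, x k • f k) : ℂ) := by
      rw [sum_inner]
      simp only [dotProduct, Matrix.mulVec, dotProduct, Pi.star_apply, Matrix.neg_apply, key,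
        neg_neg, inner_sum, inner_smul_left, inner_smul_right, Finset.mul_sum]
      congr 1; ext j; congr 1; ext k
      rw [starRingEnd_apply]; ring
    rw [hcalc, @inner_self_eq_norm_sq_to_K ℂ]
    exact pow_nonneg (RCLike.ofReal_nonneg.2 (norm_nonneg _)) 2
  refine ⟨hHerm, hPSD, ?_⟩
  set A : Matrix (Fin N) (Fin N) ℂ := -Φ with hAdef
  have hmapc : A.map (starRingEnd ℂ) = Aᵀ := by
    ext i j
    simp only [Matrix.map_apply, Matrix.transpose_apply]
    have := congrFun (congrFun hPSD.1 j) i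
    rw [Matrix.conjTranspose_apply] at this
    exact this
  have hAbar : (A.map (starRingEnd ℂ)).PosSemidef := hmapc ▸ hPSD.transpose
  have hprod : Φ * Φ.map (starRingEnd ℂ) = A * A.map (starRingEnd ℂ) := by
    rw [show Φ = -A from (neg_neg Φ).symm,
      show (-A).map (starRingEnd ℂ) = -(A.map (starRingEnd ℂ)) by ext i j; simp,
      neg_mul_neg]
  set B := A.map (starRingEnd ℂ) with hBdef
  set S := (open scoped MatrixOrder in CFC.sqrt A) with hSdef
  have hSherm : Sᴴ = S := (open scoped MatrixOrder in (CFC.sqrt_nonneg A).posSemidef.1)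
  have hP : (S * B * S).PosSemidef := by
    have := hAbar.conjTranspose_mul_mul_same S
    rwa [hSherm] at this
  obtain ⟨r, hr1, hr2⟩ := det_one_add_psd hP
  refine ⟨r, hr1, ?_⟩
  rw [hprod, ← (open scoped MatrixOrder in CFC.sqrt_mul_sqrt_self A hPSD.nonneg), ← hSdef, Matrix.mul_assoc,
    Matrix.det_one_add_mul_comm]
  exact hr2
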